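/- The lexicographically minimal rotation of a primitive string is unbordered. -/

import Mathlib

def Primitive {α : Type*} (w : List α) : Prop :=
  ∀ (v : List α) (k : ℕ), 2 ≤ k → w ≠ (List.replicate k v).flatten

def Unbordered {α : Type*} (s : List α) : Prop :=
  ∀ b : List α, b ≠ [] → b ≠ s → b <+: s → ¬ b <:+ s

/-- Appending a common suffix preserves strict lex order between equal-length lists. -/
theorem lex_append_right_len {α : Type*} [LinearOrder α] :
    ∀ {u v : List α}, u.length = v.length → List.Lex (· < ·) u v →
      ∀ b, List.Lex (· < ·) (u ++ b) (v ++ b)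
  | _, _, hl, .nil, _ => by simp at hl
  | _, _, hl, .cons h, b => .cons (lex_append_right_len (by simpa using hl) h b)
  | _, _, _, .rel h, _ => .rel h

/-- Commuting lists are powers of a common word. -/
theorem comm_pow {α : Type*} : ∀ (n : ℕ) (x y : List α), x.length + y.length ≤ n →
    x ++ y = y ++ x →
    ∃ (t : List α) (i j : ℕ),
      x = (List.replicate i t).flatten ∧ y = (List.replicate j t).flatten := by
  intro n
  induction n with
  | zero =>
    intro x y hlen _
    have hx : x = [] := List.eq_nil_of_length_eq_zero (by omega)
    have hy : y = [] := List.eq_nil_of_length_eq_zero (by omega)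
    exact ⟨[], 0, 0, by simp [hx], by simp [hy]⟩
  | succ n ih =>
    intro x y hlen hcomm
    by_cases hx : x = []
    · exact ⟨y, 0, 1, by simp [hx], by simp⟩
    by_cases hy : y = []
    · exact ⟨x, 1, 0, by simp, by simp [hy]⟩
    rcases le_total x.length y.length with h | h
    · have hpre : x <+: y :=
        List.prefix_of_prefix_length_le (x.prefix_append y)
          (by rw [hcomm]; exact y.prefix_append x) h
      obtain ⟨z, hz⟩ := hpre
      have hcomm' : x ++ z = z ++ x := by
        have h2 : x ++ (x ++ z) = x ++ (z ++ x) := by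
          conv_lhs => rw [hz, hcomm, ← hz]
          rw [List.append_assoc]
        exact List.append_cancel_left h2
      have hx1 : 1 ≤ x.length := List.length_pos_iff.mpr hx
      have hlz : x.length + z.length ≤ n := by
        have := congrArg List.length hz
        simp only [List.length_append] at this
        omega
      obtain ⟨t, i, j, hxi, hzj⟩ := ih x z hlz hcomm'
      exact ⟨t, i, i + j, hxi, by
        rw [← hz, hxi, hzj, ← List.flatten_append, ← List.replicate_add]⟩
    · have hpre : y <+: x :=
        List.prefix_of_prefix_length_le (by rw [hcomm]; exact y.prefix_append x)
          (x.prefix_append y) h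
      obtain ⟨z, hz⟩ := hpre
      have hcomm' : y ++ z = z ++ y := by
        have h2 : y ++ (y ++ z) = y ++ (z ++ y) := by
          conv_lhs => rw [hz, ← hcomm, ← hz]
          rw [List.append_assoc]
        exact List.append_cancel_left h2
      have hy1 : 1 ≤ y.length := List.length_pos_iff.mpr hy
      have hlz : y.length + z.length ≤ n := by
        have := congrArg List.length hz
        simp only [List.length_append] at this
        omega
      obtain ⟨t, i, j, hyi, hzj⟩ := ih y z hlz hcomm'
      exact ⟨t, i + j, i, by
        rw [← hz, hyi, hzj, ← List.flatten_append, ← List.replicate_add], hyi⟩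

theorem rep_comm {α : Type*} (t : List α) (k : ℕ) :
    (List.replicate k t).flatten ++ t = t ++ (List.replicate k t).flatten := by
  induction k with
  | zero => simp
  | succ k ih =>
    simp only [List.replicate_succ, List.flatten_cons, List.append_assoc]
    rw [ih]

theorem pow_rotate_len {α : Type*} (t : List α) (k : ℕ) :
    ((List.replicate k t).flatten).rotate t.length = (List.replicate k t).flatten := by
  cases k with
  | zero => simp
  | succ k =>
    rw [List.replicate_succ, List.flatten_cons, List.rotate_append_length_eq]
    exact rep_comm t k

theorem pow_rotate_mul {α : Type*} (t : List α) (k q r : ℕ) :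
    ((List.replicate k t).flatten).rotate (q * t.length + r)
      = ((List.replicate k t).flatten).rotate r := by
  induction q with
  | zero => simp
  | succ q ih =>
    have hq : (q + 1) * t.length + r = t.length + (q * t.length + r) := by ring
    rw [hq, ← List.rotate_rotate, pow_rotate_len, ih]

theorem pow_aux {α : Type*} (a c : List α) : ∀ k,
    c ++ (List.replicate k (a ++ c)).flatten ++ a
      = (List.replicate (k + 1) (c ++ a)).flatten := by
  intro k
  induction k with
  | zero => simp
  | succ k ih =>
    rw [List.replicate_succ, List.flatten_cons,
      List.replicate_succ (n := k + 1), List.flatten_cons, ← ih]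
    simp [List.append_assoc]

theorem pow_rotate {α : Type*} (a c : List α) (k r : ℕ) (h : r = a.length) :
    ((List.replicate k (a ++ c)).flatten).rotate r
      = (List.replicate k (c ++ a)).flatten := by
  subst h
  cases k with
  | zero => simp
  | succ k =>
    rw [List.replicate_succ, List.flatten_cons, List.append_assoc,
      List.rotate_append_length_eq]
    exact pow_aux a c k

theorem primitive_isRotated {α : Type*} {w z : List α} (hw : Primitive w)
    (h : w.IsRotated z) : Primitive z := by
  intro v k hk hz
  obtain ⟨n, hn⟩ := h.symm
  by_cases hv : v = []
  · subst hv
    refine hw [] k hk ?_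
    rw [← hn, hz]
    simp
  · have hvl : 0 < v.length := List.length_pos_iff.mpr hv
    set r := n % v.length with hr_def
    have hr : r < v.length := Nat.mod_lt _ hvl
    have hts : v.take r ++ v.drop r = v := List.take_append_drop r v
    have hlen_take : r = (v.take r).length := by
      rw [List.length_take]; omega
    refine hw (v.drop r ++ v.take r) k hk ?_
    rw [← hn, hz]
    calc ((List.replicate k v).flatten).rotate n
        = ((List.replicate k v).flatten).rotate ((n / v.length) * v.length + r) := by
          congr 1
          rw [hr_def, Nat.mul_comm]
          exact (Nat.div_add_mod n v.length).symm
      _ = ((List.replicate k v).flatten).rotate r := pow_rotate_mul v k _ r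
      _ = (List.replicate k (v.drop r ++ v.take r)).flatten := by
          conv_lhs => rw [← hts]
          exact pow_rotate _ _ k r hlen_take

/-- The lexicographically minimal rotation of a primitive string is unbordered. -/
theorem min_rotation_unbordered {α : Type*} [LinearOrder α] (w zmin : List α)
    (hw : Primitive w)
    (hminrot : w.IsRotated zmin)
    (hmin : ∀ z, w.IsRotated z → ¬ List.Lex (· < ·) z zmin) :
    Unbordered zmin := by
  intro b hb hbne hpre hsuf
  obtain ⟨u, hu⟩ := hpre
  obtain ⟨v, hv⟩ := hsuf
  have hprim : Primitive zmin := primitive_isRotated hw hminrot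
  have hu0 : u ≠ [] := by rintro rfl; simp at hu; exact hbne hu
  have hv0 : v ≠ [] := by
    rintro rfl; simp at hv; exact hbne hv
  have hlen : u.length = v.length := by
    have h1 := congrArg List.length hu
    have h2 := congrArg List.length hv
    simp only [List.length_append] at h1 h2
    omega
  -- u ++ b is a rotation of w
  have hrot1 : w.IsRotated (u ++ b) := by
    refine hminrot.trans ?_
    rw [← hu]; exact List.isRotated_append
  have hrot2 : w.IsRotated (b ++ v) := by
    refine hminrot.trans ?_
    rw [← hv]; exact List.isRotated_append
  have hmin1 := hmin _ hrot1
  have hmin2 := hmin _ hrot2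
  -- u = v
  have huv : u = v := by
    haveI : IsTrichotomous α (· < ·) := ⟨fun a b h1 h2 => ((lt_trichotomy a b).resolve_left h1).resolve_right h2⟩
    rcases trichotomous_of (List.Lex (· < ·)) u v with hlt | heq | hgt
    · exact absurd (by rw [← hv]; exact lex_append_right_len hlen hlt b) hmin1
    · exact heq
    · exact absurd (by rw [← hu]; exact List.Lex.append_left _ hgt b) hmin2
  subst huv
  -- zmin = b ++ u = u ++ b
  have hcomm : b ++ u = u ++ b := by rw [hu, ← hv]
  obtain ⟨t, i, j, hbi, huj⟩ :=
    comm_pow (b.length + u.length) b u le_rfl hcomm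
  have hi : i ≠ 0 := by rintro rfl; simp at hbi; exact hb hbi
  have hj : j ≠ 0 := by rintro rfl; simp at huj; exact hu0 huj
  refine hprim t (i + j) (by omega) ?_
  rw [← hu, hbi, huj, ← List.flatten_append, ← List.replicate_add]
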